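/- Let n ≥ 1 and k ≥ 1, let G = ℤⁿ be a finitely generated free abelian group, and let φ : G → GL_k(ℂ) be a group homomorphism. Let Λ = ℂ[G] be the complex group algebra of G (the ring of Laurent polynomials in n variables), and let Λ^k_φ denote the G-representation over ℂ whose underlying vector space is ℂ^k ⊗_ℂ Λ, with G acting by γ · (v ⊗ q) = (φ(γ)v) ⊗ (γ·q), where γ·q is multiplication in Λ by the group element γ. Then the group homology H_i(G; Λ^k_φ) vanishes for every i ≥ 1. -/

import Mathlib

open CategoryTheory
open scoped TensorProduct

noncomputable section BM0Aux

namespace BM0Aux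

open Limits

universe u

/-- Higher `Tor'` groups vanish when the second argument is flat. -/
lemma isZero_Tor'_succ_of_flat {R : Type u} [CommRing R] (M X : ModuleCat.{u} R)
    [Module.Flat R M] (n : ℕ) :
    IsZero (((Tor' (ModuleCat.{u} R) (n + 1)).obj X).obj M) := by
  show IsZero ((((MonoidalCategory.tensoringRight (ModuleCat.{u} R)).obj M).leftDerived
    (n + 1)).obj X)
  let P : ProjectiveResolution X := ProjectiveResolution.of X
  refine IsZero.of_iso ?_
    (P.isoLeftDerivedObj ((MonoidalCategory.tensoringRight (ModuleCat.{u} R)).obj M) (n + 1))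
  have hP := P.complex_exactAt_succ n
  have hE : ((((MonoidalCategory.tensoringRight (ModuleCat.{u} R)).obj M).mapHomologicalComplex
      (ComplexShape.down ℕ)).obj P.complex).ExactAt (n + 1) :=
    Module.Flat.rTensor_shortComplex_exact M (P.complex.sc (n + 1)) hP
  exact (HomologicalComplex.exactAt_iff_isZero_homology _ _).1 hE

/-- A `ℤ`-additive equivalence intertwining a representation with a module structure gives a
`MonoidAlgebra ℤ G`-linear equivalence out of `asModule`. -/
def asModuleEquivOf {G : Type*} [Monoid G] {V W : Type*} [AddCommGroup V] [Module ℤ V]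
    [AddCommGroup W] [Module (MonoidAlgebra ℤ G) W]
    (ρ : Representation ℤ G V) (e : V ≃+ W)
    (he : ∀ (γ : G) (v : V), e (ρ γ v) = (MonoidAlgebra.single γ (1 : ℤ)) • e v) :
    ρ.asModule ≃ₗ[MonoidAlgebra ℤ G] W where
  __ := (AddEquiv.refl ρ.asModule).trans e
  map_smul' := by
    intro r x
    show e (ρ.asModuleEquiv (r • x)) = r • e (ρ.asModuleEquiv x)
    rw [Representation.asModuleEquiv_map_smul]
    set y := ρ.asModuleEquiv x with hy
    clear_value y
    induction r using MonoidAlgebra.induction_linear with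
    | zero => simp
    | add f g hf hg => rw [map_add, LinearMap.add_apply, map_add, hf, hg, add_smul]
    | single γ m =>
        rw [Representation.asAlgebraHom_single]
        have h2 : (MonoidAlgebra.single γ m : MonoidAlgebra ℤ G)
            = m • (MonoidAlgebra.single γ (1 : ℤ)) := by
          simp [MonoidAlgebra.smul_single']
        have h3 := map_intCast_smul e ℤ ℤ m ((ρ γ) y)
        simp only [Int.cast_id] at h3
        refine h3.trans ?_
        rw [he, h2, smul_assoc]

variable (n k : ℕ) (φ : Multiplicative (Fin n → ℤ) →* Matrix.GeneralLinearGroup (Fin k) ℂ)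

/-- The untwisting equivalence on `Gn →₀ ℂᵏ`. -/
def twist : ((Multiplicative (Fin n → ℤ)) →₀ (Fin k → ℂ)) ≃ₗ[ℂ]
    ((Multiplicative (Fin n → ℤ)) →₀ (Fin k → ℂ)) :=
  LinearEquiv.ofLinear
    (Finsupp.lsum ℂ fun γ => (Finsupp.lsingle γ).comp
      (Matrix.mulVecLin (((φ γ)⁻¹ : Matrix.GeneralLinearGroup (Fin k) ℂ) :
        Matrix (Fin k) (Fin k) ℂ)))
    (Finsupp.lsum ℂ fun γ => (Finsupp.lsingle γ).comp
      (Matrix.mulVecLin ((φ γ : Matrix (Fin k) (Fin k) ℂ))))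
    (by
      apply Finsupp.lhom_ext
      intro γ v
      have h : ((((φ γ)⁻¹ : Matrix.GeneralLinearGroup (Fin k) ℂ) : Matrix (Fin k) (Fin k) ℂ)) *
          ((φ γ : Matrix (Fin k) (Fin k) ℂ)) = 1 := Units.inv_mul _
      simp only [Finsupp.lsingle_apply, LinearMap.coe_comp, Function.comp_apply,
        Finsupp.lsum_single, Matrix.mulVecLin_apply, LinearMap.id_coe, id_eq,
        Matrix.mulVec_mulVec, h, Matrix.one_mulVec])
    (by
      apply Finsupp.lhom_ext
      intro γ v
      have h : ((φ γ : Matrix (Fin k) (Fin k) ℂ)) *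
          ((((φ γ)⁻¹ : Matrix.GeneralLinearGroup (Fin k) ℂ) : Matrix (Fin k) (Fin k) ℂ)) = 1 :=
        Units.mul_inv _
      simp only [Finsupp.lsingle_apply, LinearMap.coe_comp, Function.comp_apply,
        Finsupp.lsum_single, Matrix.mulVecLin_apply, LinearMap.id_coe, id_eq,
        Matrix.mulVec_mulVec, h, Matrix.one_mulVec])

lemma twist_single (γ : Multiplicative (Fin n → ℤ)) (v : Fin k → ℂ) :
    twist n k φ (Finsupp.single γ v) =
      Finsupp.single γ (Matrix.mulVec (((φ γ)⁻¹ : Matrix.GeneralLinearGroup (Fin k) ℂ) :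
        Matrix (Fin k) (Fin k) ℂ) v) := by
  simp [twist]

/-- The additive equivalence from `ℂᵏ ⊗[ℂ] ℂ[G]` to `ℤ[G] ⊗[ℤ] ℂᵏ`. -/
def eShape : ((Fin k → ℂ) ⊗[ℂ] MonoidAlgebra ℂ (Multiplicative (Fin n → ℤ))) ≃+
    (MonoidAlgebra ℤ (Multiplicative (Fin n → ℤ)) ⊗[ℤ] (Fin k → ℂ)) :=
  (LinearEquiv.lTensor (Fin k → ℂ) (MonoidAlgebra.coeffLinearEquiv ℂ)).toAddEquiv.trans
  ((TensorProduct.finsuppScalarRight ℂ ℂ (Fin k → ℂ) (Multiplicative (Fin n → ℤ))).toAddEquiv.trans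
    ((twist n k φ).toAddEquiv.trans
      ((TensorProduct.finsuppScalarLeft ℤ (Fin k → ℂ) (Multiplicative (Fin n → ℤ))).symm.toAddEquiv.trans
        (LinearEquiv.rTensor (Fin k → ℂ) (MonoidAlgebra.coeffLinearEquiv ℤ (S := ℤ)
          (M := Multiplicative (Fin n → ℤ))).symm).toAddEquiv)))

lemma eShape_tmul_single (w : Fin k → ℂ) (ε : Multiplicative (Fin n → ℤ)) (c : ℂ) :
    eShape n k φ (w ⊗ₜ[ℂ] (MonoidAlgebra.single ε c)) =
      (MonoidAlgebra.single ε (1 : ℤ)) ⊗ₜ[ℤ]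
        (Matrix.mulVec (((φ ε)⁻¹ : Matrix.GeneralLinearGroup (Fin k) ℂ) :
          Matrix (Fin k) (Fin k) ℂ) (c • w)) := by
  have h1 : TensorProduct.finsuppScalarRight ℂ ℂ (Fin k → ℂ) (Multiplicative (Fin n → ℤ))
      (w ⊗ₜ[ℂ] (Finsupp.single ε c)) = Finsupp.single ε (c • w) := by
    rw [TensorProduct.finsuppScalarRight_apply_tmul]
    rw [Finsupp.sum_single_index]
    simp
  show (LinearEquiv.rTensor (Fin k → ℂ) (MonoidAlgebra.coeffLinearEquiv ℤ (S := ℤ)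
      (M := Multiplicative (Fin n → ℤ))).symm)
      ((TensorProduct.finsuppScalarLeft ℤ (Fin k → ℂ) (Multiplicative (Fin n → ℤ))).symm
      (twist n k φ (TensorProduct.finsuppScalarRight ℂ ℂ (Fin k → ℂ) (Multiplicative (Fin n → ℤ))
        (w ⊗ₜ[ℂ] (Finsupp.single ε c))))) = _
  rw [h1, twist_single, TensorProduct.finsuppScalarLeft_symm_apply_single,
    LinearEquiv.rTensor_tmul]
  rfl

set_option synthInstance.maxHeartbeats 1000000 in
set_option maxHeartbeats 1000000 in
lemma eShape_equivariant
    (ρ : Representation ℤ (Multiplicative (Fin n → ℤ))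
      ((Fin k → ℂ) ⊗[ℂ] MonoidAlgebra ℂ (Multiplicative (Fin n → ℤ))))
    (hρ : ∀ (γ : Multiplicative (Fin n → ℤ)) (v : Fin k → ℂ)
      (q : MonoidAlgebra ℂ (Multiplicative (Fin n → ℤ))),
      ρ γ (v ⊗ₜ[ℂ] q) =
        (Matrix.mulVec (φ γ : Matrix (Fin k) (Fin k) ℂ) v) ⊗ₜ[ℂ]
          (MonoidAlgebra.of ℂ (Multiplicative (Fin n → ℤ)) γ * q))
    (γ : Multiplicative (Fin n → ℤ))
    (x : (Fin k → ℂ) ⊗[ℂ] MonoidAlgebra ℂ (Multiplicative (Fin n → ℤ))) :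
    eShape n k φ (ρ γ x) = (MonoidAlgebra.single γ (1 : ℤ)) • eShape n k φ x := by
  induction x using TensorProduct.induction_on with
  | zero => simp
  | add a b ha hb => rw [map_add, map_add, ha, hb, map_add, smul_add]
  | tmul v q =>
    induction q using MonoidAlgebra.induction_linear with
    | zero =>
      rw [TensorProduct.tmul_zero, map_zero, map_zero]
      rw [smul_zero]
    | add f g hf hg =>
      rw [show v ⊗ₜ[ℂ] (f + g) = v ⊗ₜ[ℂ] f + v ⊗ₜ[ℂ] g from TensorProduct.tmul_add v f g,
        map_add, map_add, hf, hg, map_add, smul_add]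
    | single δ c =>
      rw [hρ]
      have hmul : (MonoidAlgebra.of ℂ (Multiplicative (Fin n → ℤ)) γ) *
          MonoidAlgebra.single δ c = MonoidAlgebra.single (γ * δ) c := by
        rw [MonoidAlgebra.of_apply, MonoidAlgebra.single_mul_single, one_mul]
      rw [hmul, eShape_tmul_single, eShape_tmul_single, TensorProduct.smul_tmul']
      have hsingle : (MonoidAlgebra.single γ (1 : ℤ)) • (MonoidAlgebra.single δ (1 : ℤ)) =
          (MonoidAlgebra.single (γ * δ) (1 : ℤ) :
            MonoidAlgebra ℤ (Multiplicative (Fin n → ℤ))) := by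
        rw [smul_eq_mul, MonoidAlgebra.single_mul_single, one_mul]
      rw [hsingle]
      congr 1
      have hu : (φ (γ * δ))⁻¹ * φ γ = (φ δ)⁻¹ := by
        rw [map_mul, mul_inv_rev, inv_mul_cancel_right]
      have hu' : ((((φ (γ * δ))⁻¹ : Matrix.GeneralLinearGroup (Fin k) ℂ) :
            Matrix (Fin k) (Fin k) ℂ)) * ((φ γ : Matrix (Fin k) (Fin k) ℂ)) =
          (((φ δ)⁻¹ : Matrix.GeneralLinearGroup (Fin k) ℂ) : Matrix (Fin k) (Fin k) ℂ) := by
        rw [← Units.val_mul, hu]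
      rw [Matrix.mulVec_smul, Matrix.mulVec_smul, Matrix.mulVec_mulVec, hu']

end BM0Aux

end BM0Aux

set_option synthInstance.maxHeartbeats 1000000 in
set_option maxHeartbeats 1000000 in
/-- Let `G = ℤⁿ` (`n ≥ 1`), `k ≥ 1`, and let `φ : G → GL_k(ℂ)` be a
group homomorphism.  Let `Λ = ℂ[G]` be the complex group algebra, and let `Λ^k_φ` be the
`G`-representation with underlying vector space `ℂ^k ⊗_ℂ Λ` and action
`γ · (v ⊗ q) = (φ(γ) v) ⊗ (γ · q)`.  Then the group homology `H_i(G; Λ^k_φ)`, i.e. the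
`i`-th left derived functor of `(- ⊗_{ℤG} Λ^k_φ)` evaluated at the trivial module `ℤ`
(which is computed by a free resolution `C_*(G)` of `ℤ` over `ℤG` tensored with `Λ^k_φ`),
vanishes for every `i ≥ 1`. -/
theorem boundary_manifold_stmt0
    (n k : ℕ) (hn : 1 ≤ n) (hk : 1 ≤ k)
    (φ : Multiplicative (Fin n → ℤ) →* Matrix.GeneralLinearGroup (Fin k) ℂ)
    (ρ : Representation ℤ (Multiplicative (Fin n → ℤ))
      ((Fin k → ℂ) ⊗[ℂ] MonoidAlgebra ℂ (Multiplicative (Fin n → ℤ))))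
    (hρ : ∀ (γ : Multiplicative (Fin n → ℤ)) (v : Fin k → ℂ)
      (q : MonoidAlgebra ℂ (Multiplicative (Fin n → ℤ))),
      ρ γ (v ⊗ₜ[ℂ] q) =
        (Matrix.mulVec (φ γ : Matrix (Fin k) (Fin k) ℂ) v) ⊗ₜ[ℂ]
          (MonoidAlgebra.of ℂ (Multiplicative (Fin n → ℤ)) γ * q))
    (i : ℕ) (hi : 1 ≤ i) :
    Limits.IsZero
      (((Tor' (ModuleCat (MonoidAlgebra ℤ (Multiplicative (Fin n → ℤ)))) i).obj
        (ModuleCat.of (MonoidAlgebra ℤ (Multiplicative (Fin n → ℤ)))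
          (Representation.trivial ℤ (G := Multiplicative (Fin n → ℤ)) (V := ℤ)).asModule)).obj
        (ModuleCat.of (MonoidAlgebra ℤ (Multiplicative (Fin n → ℤ))) ρ.asModule)) := by
  haveI hQ : Module.Flat ℤ ℚ := IsLocalization.flat ℚ (nonZeroDivisors ℤ)
  haveI hF : Module.Flat ℤ (Fin k → ℂ) := Module.Flat.trans ℤ ℚ (Fin k → ℂ)
  have key := BM0Aux.eShape_equivariant n k φ ρ hρ
  haveI : Module.Flat (MonoidAlgebra ℤ (Multiplicative (Fin n → ℤ))) ρ.asModule :=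
    Module.Flat.of_linearEquiv (BM0Aux.asModuleEquivOf ρ (BM0Aux.eShape n k φ) key)
  obtain ⟨m, rfl⟩ : ∃ m, i = m + 1 := ⟨i - 1, by omega⟩
  exact @BM0Aux.isZero_Tor'_succ_of_flat _ _ _ _ this m
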